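/- Let G be a finite connected simple graph on n ≥ 2 vertices. Then the rna number σ⁻(G) equals 1 if and only if G has a cut-edge (bridge) uv such that the two connected components of G − uv have orders differing by at most 1. -/

import Mathlib

/-- A sign assignment on edges: `σ e` means edge `e` is positive. `(G, σ)` is a
*parity signed graph* if there is a bijective labelling `f : V → {1, …, n}`
(`n = |V|`) such that an edge is positive iff its endpoints' labels have the same parity. -/
def IsParitySigned {V : Type*} [Fintype V] (G : SimpleGraph V) (σ : Sym2 V → Prop) : Prop :=
  ∃ f : V → ℕ, Set.BijOn f Set.univ (Set.Icc 1 (Fintype.card V)) ∧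
    ∀ u v : V, G.Adj u v → (σ s(u, v) ↔ f u % 2 = f v % 2)

/-- The endpoints of `e` get labels of opposite parity under `f`. -/
def diffParity {V : Type*} (f : V → ℕ) : Sym2 V → Prop :=
  Sym2.lift ⟨fun u v => f u % 2 ≠ f v % 2, fun _ _ => propext ne_comm⟩

/-- Number of negative edges of `G` under the labelling `f`. -/
noncomputable def negCount {V : Type*} [Fintype V] (G : SimpleGraph V) (f : V → ℕ) : ℕ :=
  {e ∈ G.edgeSet | diffParity f e}.ncard

/-- Number of positive edges of `G` under the labelling `f`. -/
noncomputable def posCount {V : Type*} [Fintype V] (G : SimpleGraph V) (f : V → ℕ) : ℕ :=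
  {e ∈ G.edgeSet | ¬ diffParity f e}.ncard

/-- The *rna* number: the minimum number of negative edges over all bijective
labellings `f : V → {1, …, n}`. -/
noncomputable def rnaNumber {V : Type*} [Fintype V] (G : SimpleGraph V) : ℕ :=
  sInf {k | ∃ f : V → ℕ, Set.BijOn f Set.univ (Set.Icc 1 (Fintype.card V)) ∧ negCount G f = k}

/-- The *adhika* number: the maximum number of positive edges over all bijective
labellings `f : V → {1, …, n}`. -/
noncomputable def adhikaNumber {V : Type*} [Fintype V] (G : SimpleGraph V) : ℕ :=
  sSup {k | ∃ f : V → ℕ, Set.BijOn f Set.univ (Set.Icc 1 (Fintype.card V)) ∧ posCount G f = k}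

/-- The star `K_{1,q}`: center `0`, leaves the `q` nonzero vertices of `Fin (q+1)`. -/
def starGraph (q : ℕ) : SimpleGraph (Fin (q + 1)) :=
  SimpleGraph.fromRel (fun u _ => u = 0)

open SimpleGraph Set

section Aux

variable {V : Type*}

lemma reach_delete_aux {G : SimpleGraph V} (u v : V) {a b : V}
    (p : G.Walk a b) :
    (G.deleteEdges {s(u,v)}).Reachable a b ∨
      ((G.deleteEdges {s(u,v)}).Reachable a u ∧ (G.deleteEdges {s(u,v)}).Reachable v b) ∨
      ((G.deleteEdges {s(u,v)}).Reachable a v ∧ (G.deleteEdges {s(u,v)}).Reachable u b) := by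
  induction p with
  | nil => exact Or.inl (Reachable.refl _)
  | @cons x y b hxy p ih =>
    by_cases he : s(x, y) = s(u, v)
    · rw [Sym2.eq_iff] at he
      rcases he with ⟨rfl, rfl⟩ | ⟨rfl, rfl⟩
      · rcases ih with h | ⟨h1, h2⟩ | ⟨h1, h2⟩
        · exact Or.inr (Or.inl ⟨Reachable.refl _, h⟩)
        · exact Or.inl (h1.symm.trans h2)
        · exact Or.inl h2
      · rcases ih with h | ⟨h1, h2⟩ | ⟨h1, h2⟩
        · exact Or.inr (Or.inr ⟨Reachable.refl _, h⟩)
        · exact Or.inl h2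
        · exact Or.inl (h1.symm.trans h2)
    · have hadj : (G.deleteEdges {s(u,v)}).Adj x y := by
        rw [SimpleGraph.deleteEdges_adj]
        exact ⟨hxy, by simpa using he⟩
      rcases ih with h | ⟨h1, h2⟩ | ⟨h1, h2⟩
      · exact Or.inl (hadj.reachable.trans h)
      · exact Or.inr (Or.inl ⟨hadj.reachable.trans h1, h2⟩)
      · exact Or.inr (Or.inr ⟨hadj.reachable.trans h1, h2⟩)

lemma reach_delete {G : SimpleGraph V} (u v : V) {a : V}
    (h : G.Reachable a u) :
    (G.deleteEdges {s(u,v)}).Reachable a u ∨ (G.deleteEdges {s(u,v)}).Reachable a v := by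
  obtain ⟨p⟩ := h
  rcases reach_delete_aux u v p with h | ⟨h1, h2⟩ | ⟨h1, h2⟩
  · exact Or.inl h
  · exact Or.inl h1
  · exact Or.inr h1

lemma parity_reach {G : SimpleGraph V} {f : V → ℕ} {u v : V}
    (hf : ∀ a b : V, G.Adj a b → s(a,b) ≠ s(u,v) → f a % 2 = f b % 2)
    {a b : V} (h : (G.deleteEdges {s(u,v)}).Reachable a b) : f a % 2 = f b % 2 := by
  obtain ⟨p⟩ := h
  induction p with
  | nil => rfl
  | @cons a c _ hac p ih =>
    rw [SimpleGraph.deleteEdges_adj, Set.mem_singleton_iff] at hac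
    exact (hf a c hac.1 hac.2).trans ih

lemma exists_cross {G : SimpleGraph V} (f : V → ℕ) {a b : V} (p : G.Walk a b)
    (h : f a % 2 ≠ f b % 2) : ∃ x y : V, G.Adj x y ∧ f x % 2 ≠ f y % 2 := by
  induction p with
  | nil => exact absurd rfl h
  | @cons a c _ hac p ih =>
    by_cases hx : f a % 2 = f c % 2
    · exact ih (fun hcb => h (hx.trans hcb))
    · exact ⟨a, c, hac, hx⟩

lemma card_parity_filter (n : ℕ) :
    (((Finset.Icc 1 n).filter (fun m => m % 2 = 1)).card = (n+1)/2) ∧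
    (((Finset.Icc 1 n).filter (fun m => m % 2 = 0)).card = n/2) := by
  induction n with
  | zero => simp
  | succ n ih =>
    have h : Finset.Icc 1 (n+1) = insert (n+1) (Finset.Icc 1 n) := by
      ext m; simp only [Finset.mem_Icc, Finset.mem_insert]; omega
    have hni : (n+1) ∉ Finset.Icc 1 n := by simp
    rw [h, Finset.filter_insert, Finset.filter_insert]
    rcases Nat.mod_two_eq_zero_or_one (n+1) with hp | hp
    · rw [if_neg (by omega), if_pos hp,
        Finset.card_insert_of_notMem (fun hc => hni (Finset.mem_of_mem_filter _ hc))]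
      exact ⟨by rw [ih.1]; omega, by rw [ih.2]; omega⟩
    · rw [if_pos hp, if_neg (by omega),
        Finset.card_insert_of_notMem (fun hc => hni (Finset.mem_of_mem_filter _ hc))]
      exact ⟨by rw [ih.1]; omega, by rw [ih.2]; omega⟩

lemma ncard_parity_class [Fintype V] {n : ℕ} {f : V → ℕ}
    (hf : Set.BijOn f Set.univ (Set.Icc 1 n)) (r : ℕ) :
    {w : V | f w % 2 = r}.ncard = ((Finset.Icc 1 n).filter (fun m => m % 2 = r)).card := by
  have himg : f '' {w : V | f w % 2 = r} = ↑((Finset.Icc 1 n).filter (fun m => m % 2 = r)) := by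
    ext m
    simp only [Set.mem_image, Finset.coe_filter, Set.mem_setOf_eq, Finset.mem_Icc]
    constructor
    · rintro ⟨w, hw, rfl⟩
      have := hf.mapsTo (Set.mem_univ w)
      rw [Set.mem_Icc] at this
      exact ⟨this, hw⟩
    · rintro ⟨hm, hr⟩
      obtain ⟨w, -, rfl⟩ := hf.surjOn (by rw [Set.mem_Icc]; exact hm)
      exact ⟨w, hr, rfl⟩
  rw [← Set.ncard_coe_finset, ← himg,
    Set.ncard_image_of_injOn (hf.injOn.mono (Set.subset_univ _))]

lemma one_le_negCount [Fintype V] {G : SimpleGraph V}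
    (hG : G.Connected) (hn : 2 ≤ Fintype.card V) {f : V → ℕ}
    (hf : Set.BijOn f Set.univ (Set.Icc 1 (Fintype.card V))) : 1 ≤ negCount G f := by
  obtain ⟨a, -, ha⟩ := hf.surjOn (show (1:ℕ) ∈ Set.Icc 1 (Fintype.card V) by
    rw [Set.mem_Icc]; omega)
  obtain ⟨b, -, hb⟩ := hf.surjOn (show (2:ℕ) ∈ Set.Icc 1 (Fintype.card V) by
    rw [Set.mem_Icc]; omega)
  have hab : f a % 2 ≠ f b % 2 := by rw [ha, hb]; omega
  obtain ⟨p⟩ := hG.preconnected a b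
  obtain ⟨x, y, hxy, hpar⟩ := exists_cross f p hab
  have hmem : s(x,y) ∈ {e ∈ G.edgeSet | diffParity f e} := ⟨hxy, hpar⟩
  rw [negCount, Nat.one_le_iff_ne_zero, ← Nat.pos_iff_ne_zero,
    Set.ncard_pos (Set.toFinite _)]
  exact ⟨_, hmem⟩

lemma rna_eq_one_of [Fintype V] {G : SimpleGraph V}
    (hG : G.Connected) (hn : 2 ≤ Fintype.card V) {f : V → ℕ}
    (hbij : Set.BijOn f Set.univ (Set.Icc 1 (Fintype.card V)))
    (hneg : negCount G f = 1) : rnaNumber G = 1 := by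
  have hle : rnaNumber G ≤ 1 := Nat.sInf_le ⟨f, hbij, hneg⟩
  have h0 : rnaNumber G ≠ 0 := by
    intro h
    rw [rnaNumber, Nat.sInf_eq_zero] at h
    rcases h with h | h
    · obtain ⟨g, hg, hg0⟩ := h
      have := one_le_negCount hG hn hg
      omega
    · exact (Set.eq_empty_iff_forall_notMem.mp h 1) ⟨f, hbij, hneg⟩
  omega

lemma exists_good_labelling [Fintype V] {G : SimpleGraph V}
    (hG : G.Connected) {u v : V} (hadj : G.Adj u v)
    (hbr : ¬(G.deleteEdges {s(u,v)}).Reachable u v)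
    (hA : (((G.deleteEdges {s(u,v)}).connectedComponentMk u).supp).ncard
        = (Fintype.card V + 1) / 2) :
    ∃ f : V → ℕ, Set.BijOn f Set.univ (Set.Icc 1 (Fintype.card V)) ∧ negCount G f = 1 := by
  classical
  set n := Fintype.card V with hn
  set G' := G.deleteEdges {s(u,v)} with hG'
  set A : Set V := (G'.connectedComponentMk u).supp with hAdef
  have hmemA : ∀ w, w ∈ A ↔ G'.Reachable w u := by
    intro w
    rw [hAdef, ConnectedComponent.mem_supp_iff, ConnectedComponent.eq]
  have huA : u ∈ A := (hmemA u).mpr (Reachable.refl _)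
  have hvA : v ∉ A := fun hc => hbr ((hmemA v).mp hc).symm
  have hcompl : Aᶜ.ncard = n / 2 := by
    have := Set.ncard_add_ncard_compl A
    rw [Nat.card_eq_fintype_card, ← hn] at this
    omega
  set Os : Set ℕ := ↑((Finset.Icc 1 n).filter (fun m => m % 2 = 1)) with hOs
  set Es : Set ℕ := ↑((Finset.Icc 1 n).filter (fun m => m % 2 = 0)) with hEs
  have hOsmem : ∀ m, m ∈ Os ↔ (1 ≤ m ∧ m ≤ n) ∧ m % 2 = 1 := by
    intro m; rw [hOs]; simp [Finset.mem_filter, Finset.mem_Icc]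
  have hEsmem : ∀ m, m ∈ Es ↔ (1 ≤ m ∧ m ≤ n) ∧ m % 2 = 0 := by
    intro m; rw [hEs]; simp [Finset.mem_filter, Finset.mem_Icc]
  have hOsncard : Os.ncard = (n+1)/2 := by
    rw [hOs, Set.ncard_coe_finset, (card_parity_filter n).1]
  have hEsncard : Es.ncard = n/2 := by
    rw [hEs, Set.ncard_coe_finset, (card_parity_filter n).2]
  obtain ⟨g, hg⟩ := Set.Finite.exists_bijOn_of_encard_eq (t := Os) (Set.toFinite A)
    (by rw [← Set.Finite.cast_ncard_eq (Set.toFinite A),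
        ← Set.Finite.cast_ncard_eq (Set.toFinite Os), hA, hOsncard])
  obtain ⟨h, hh⟩ := Set.Finite.exists_bijOn_of_encard_eq (t := Es) (Set.toFinite Aᶜ)
    (by rw [← Set.Finite.cast_ncard_eq (Set.toFinite Aᶜ),
        ← Set.Finite.cast_ncard_eq (Set.toFinite Es), hcompl, hEsncard])
  set f : V → ℕ := fun w => if w ∈ A then g w else h w with hfdef
  have hfA : ∀ w ∈ A, f w ∈ Os := fun w hw => by
    rw [hfdef]; simp only [if_pos hw]; exact hg.mapsTo hw
  have hfB : ∀ w, w ∉ A → f w ∈ Es := fun w hw => by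
    rw [hfdef]; simp only [if_neg hw]; exact hh.mapsTo hw
  have hpA : ∀ w ∈ A, f w % 2 = 1 := fun w hw => ((hOsmem _).mp (hfA w hw)).2
  have hpB : ∀ w, w ∉ A → f w % 2 = 0 := fun w hw => ((hEsmem _).mp (hfB w hw)).2
  refine ⟨f, ⟨?_, ?_, ?_⟩, ?_⟩
  · intro w _
    rw [Set.mem_Icc]
    by_cases hw : w ∈ A
    · exact ((hOsmem _).mp (hfA w hw)).1
    · exact ((hEsmem _).mp (hfB w hw)).1
  · intro w _ w' _ hww
    by_cases hw : w ∈ A <;> by_cases hw' : w' ∈ A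
    · refine hg.injOn hw hw' ?_
      rw [hfdef] at hww; simpa [if_pos hw, if_pos hw'] using hww
    · exact absurd (hww ▸ hpA w hw) (by rw [hpB w' hw']; omega)
    · exact absurd (hww ▸ hpB w hw) (by rw [hpA w' hw']; omega)
    · refine hh.injOn hw hw' ?_
      rw [hfdef] at hww; simpa [if_neg hw, if_neg hw'] using hww
  · intro m hm
    rw [Set.mem_Icc] at hm
    rcases Nat.mod_two_eq_zero_or_one m with hp | hp
    · obtain ⟨w, hw, hwm⟩ := hh.surjOn ((hEsmem m).mpr ⟨hm, hp⟩)
      rw [Set.mem_compl_iff] at hw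
      exact ⟨w, Set.mem_univ w, by rw [hfdef]; simp only [if_neg hw]; exact hwm⟩
    · obtain ⟨w, hw, hwm⟩ := hg.surjOn ((hOsmem m).mpr ⟨hm, hp⟩)
      exact ⟨w, Set.mem_univ w, by rw [hfdef]; simp only [if_pos hw]; exact hwm⟩
  · have hclosed : ∀ x y : V, G.Adj x y → x ∈ A → s(x,y) ≠ s(u,v) → y ∈ A := by
      intro x y hxy hx hne
      have hadj' : G'.Adj x y := by
        rw [hG', SimpleGraph.deleteEdges_adj]
        exact ⟨hxy, by simpa using hne⟩
      exact (hmemA y).mpr (hadj'.symm.reachable.trans ((hmemA x).mp hx))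
    have hset : {e ∈ G.edgeSet | diffParity f e} = {s(u,v)} := by
      ext e
      induction e using Sym2.ind with
      | _ x y =>
        simp only [Set.mem_setOf_eq, Set.mem_singleton_iff, SimpleGraph.mem_edgeSet,
          diffParity, Sym2.lift_mk]
        constructor
        · rintro ⟨hxy, hpar⟩
          by_cases hx : x ∈ A <;> by_cases hy : y ∈ A
          · exact absurd ((hpA x hx).trans (hpA y hy).symm) hpar
          · by_contra hne
            exact hy (hclosed x y hxy hx hne)
          · by_contra hne
            refine hx (hclosed y x hxy.symm hy ?_)
            rw [Sym2.eq_swap]; exact hne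
          · exact absurd ((hpB x hx).trans (hpB y hy).symm) hpar
        · intro he
          rw [Sym2.eq_iff] at he
          rcases he with ⟨rfl, rfl⟩ | ⟨rfl, rfl⟩
          · exact ⟨hadj, by rw [hpA x huA, hpB y hvA]; omega⟩
          · exact ⟨hadj.symm, by rw [hpB x hvA, hpA y huA]; omega⟩
    rw [negCount, hset, Set.ncard_singleton]

end Aux

/-- A connected graph `G` on `n ≥ 2` vertices has rna number `1` iff
`G` has a bridge `uv` such that the two connected components of `G - uv` (the component
of `u` and the component of `v` after deleting the edge `uv`) have orders differing by
at most `1`. -/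
theorem rna_eq_one_iff_bridge {V : Type*} [Fintype V] (G : SimpleGraph V)
    (hG : G.Connected) (hn : 2 ≤ Fintype.card V) :
    rnaNumber G = 1 ↔
      ∃ u v : V, G.Adj u v ∧ G.IsBridge s(u, v) ∧
        |((((G.deleteEdges {s(u, v)}).connectedComponentMk u).supp.ncard : ℤ)) -
          (((G.deleteEdges {s(u, v)}).connectedComponentMk v).supp.ncard : ℤ)| ≤ 1 := by
  constructor
  · intro h
    have h1 : 1 ∈ {k | ∃ f : V → ℕ,
        Set.BijOn f Set.univ (Set.Icc 1 (Fintype.card V)) ∧ negCount G f = k} := by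
      have hne : {k | ∃ f : V → ℕ,
          Set.BijOn f Set.univ (Set.Icc 1 (Fintype.card V)) ∧ negCount G f = k}.Nonempty := by
        by_contra hc
        rw [Set.not_nonempty_iff_eq_empty] at hc
        rw [rnaNumber, hc, Nat.sInf_empty] at h
        exact one_ne_zero h.symm
      have hmem := Nat.sInf_mem hne
      rw [rnaNumber] at h
      rwa [h] at hmem
    obtain ⟨f, hbij, hneg⟩ := h1
    obtain ⟨e, he⟩ := Set.ncard_eq_one.mp hneg
    induction e using Sym2.ind with
    | _ u v =>
      have hmem : s(u,v) ∈ {e ∈ G.edgeSet | diffParity f e} := by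
        rw [he]; exact Set.mem_singleton _
      obtain ⟨hadj, hpar⟩ := hmem
      rw [SimpleGraph.mem_edgeSet] at hadj
      rw [show diffParity f s(u,v) = (f u % 2 ≠ f v % 2) from rfl] at hpar
      have hother : ∀ a b : V, G.Adj a b → s(a,b) ≠ s(u,v) → f a % 2 = f b % 2 := by
        intro a b hab hne
        by_contra hc
        have : s(a,b) ∈ {e ∈ G.edgeSet | diffParity f e} := ⟨hab, hc⟩
        rw [he, Set.mem_singleton_iff] at this
        exact hne this
      have hbr : ¬(G.deleteEdges {s(u,v)}).Reachable u v :=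
        fun hr => hpar (parity_reach hother hr)
      refine ⟨u, v, hadj, SimpleGraph.isBridge_iff.mpr hbr, ?_⟩
      have hsuppu : ((G.deleteEdges {s(u,v)}).connectedComponentMk u).supp
          = {w | f w % 2 = f u % 2} := by
        ext w
        rw [ConnectedComponent.mem_supp_iff, ConnectedComponent.eq, Set.mem_setOf_eq]
        constructor
        · exact fun hr => parity_reach hother hr
        · intro hpw
          rcases reach_delete u v (hG.preconnected w u) with hr | hr
          · exact hr
          · have := parity_reach hother hr
            omega
      have hsuppv : ((G.deleteEdges {s(u,v)}).connectedComponentMk v).supp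
          = {w | f w % 2 = f v % 2} := by
        ext w
        rw [ConnectedComponent.mem_supp_iff, ConnectedComponent.eq, Set.mem_setOf_eq]
        constructor
        · exact fun hr => parity_reach hother hr
        · intro hpw
          have hsw : s(v,u) = s(u,v) := Sym2.eq_swap
          rcases reach_delete v u (hG.preconnected w v) with hr | hr
          · rw [hsw] at hr; exact hr
          · rw [hsw] at hr
            have := parity_reach hother hr
            omega
      rw [hsuppu, hsuppv, ncard_parity_class hbij (f u % 2),
        ncard_parity_class hbij (f v % 2)]
      rcases Nat.mod_two_eq_zero_or_one (f u) with hp | hp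
      · have hq : f v % 2 = 1 := by omega
        rw [hp, hq, (card_parity_filter (Fintype.card V)).1,
          (card_parity_filter (Fintype.card V)).2, abs_sub_le_iff]
        constructor <;> [skip; skip] <;> omega
      · have hq : f v % 2 = 0 := by omega
        rw [hp, hq, (card_parity_filter (Fintype.card V)).1,
          (card_parity_filter (Fintype.card V)).2, abs_sub_le_iff]
        constructor <;> omega
  · rintro ⟨u, v, hadj, hbridge, hsize⟩
    have hbr : ¬(G.deleteEdges {s(u,v)}).Reachable u v :=
      SimpleGraph.isBridge_iff.mp hbridge
    set G' := G.deleteEdges {s(u,v)} with hG'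
    set A : Set V := (G'.connectedComponentMk u).supp with hAdef
    set B : Set V := (G'.connectedComponentMk v).supp with hBdef
    have hmemA : ∀ w, w ∈ A ↔ G'.Reachable w u := by
      intro w
      rw [hAdef, ConnectedComponent.mem_supp_iff, ConnectedComponent.eq]
    have hmemB : ∀ w, w ∈ B ↔ G'.Reachable w v := by
      intro w
      rw [hBdef, ConnectedComponent.mem_supp_iff, ConnectedComponent.eq]
    have hdisj : Disjoint A B := by
      rw [Set.disjoint_left]
      intro w hwA hwB
      exact hbr (((hmemA w).mp hwA).symm.trans ((hmemB w).mp hwB))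
    have hunion : A ∪ B = Set.univ := by
      apply Set.eq_univ_of_forall
      intro w
      rw [Set.mem_union, hmemA, hmemB]
      exact reach_delete u v (hG.preconnected w u)
    have hsum : A.ncard + B.ncard = Fintype.card V := by
      rw [← Set.ncard_union_eq hdisj (Set.toFinite _) (Set.toFinite _), hunion,
        Set.ncard_univ, Nat.card_eq_fintype_card]
    rw [abs_sub_le_iff] at hsize
    have hcases : A.ncard = (Fintype.card V + 1) / 2 ∨
        B.ncard = (Fintype.card V + 1) / 2 := by omega
    rcases hcases with hc | hc
    · obtain ⟨f, hbij, hneg⟩ := exists_good_labelling hG hadj hbr hc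
      exact rna_eq_one_of hG hn hbij hneg
    · have hsw : s(v,u) = s(u,v) := Sym2.eq_swap
      have hbr' : ¬(G.deleteEdges {s(v,u)}).Reachable v u := by
        rw [hsw]; exact fun hr => hbr hr.symm
      have hc' : (((G.deleteEdges {s(v,u)}).connectedComponentMk v).supp).ncard
          = (Fintype.card V + 1) / 2 := by
        rw [hsw]; exact hc
      obtain ⟨f, hbij, hneg⟩ := exists_good_labelling hG hadj.symm hbr' hc'
      exact rna_eq_one_of hG hn hbij hneg
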